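/- Let φ: B̄∞(0,1) → ℝ² be C¹ with dφ(x) = diag(2,1/2) + E(x) where ‖E(x)‖ ≤ δ for all x ∈ B̄∞(0,1). Let F: [-1,1] → [-1,1] be C¹ with sup|F'| ≤ Cδ, and suppose x = (x₁, F(x₁)) and x̃ = (x̃₁, F(x̃₁)) lie in B̄∞(0,1) with y = φ(x), ỹ = φ(x̃). Then, for δ sufficiently small, |x - x̃| ≤ (1/2 + C'δ)|y - ỹ| for a constant C' depending only on C. -/

import Mathlib

open Set

/-- The closed ℓ∞ unit ball `B̄∞(0,1) ⊂ ℝ²`. -/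
def box : Set (ℝ × ℝ) := Icc (-1:ℝ) 1 ×ˢ Icc (-1:ℝ) 1

/-- The Euclidean norm on `ℝ²`. -/
noncomputable def euclNorm (p : ℝ × ℝ) : ℝ := Real.sqrt (p.1 ^ 2 + p.2 ^ 2)

lemma abs_fst_le_euclNorm (p : ℝ × ℝ) : |p.1| ≤ euclNorm p := by
  rw [← Real.sqrt_sq_eq_abs]
  exact Real.sqrt_le_sqrt (by nlinarith [sq_nonneg p.2])

lemma euclNorm_le_abs_add (p : ℝ × ℝ) : euclNorm p ≤ |p.1| + |p.2| := by
  have h : |p.1| + |p.2| = Real.sqrt ((|p.1| + |p.2|)^2) :=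
    (Real.sqrt_sq (by positivity)).symm
  rw [h]
  apply Real.sqrt_le_sqrt
  have h1 := sq_abs p.1
  have h2 := sq_abs p.2
  nlinarith [abs_nonneg p.1, abs_nonneg p.2]

/-- backward contraction along an unstable graph.  If `dφ = diag(2,1/2) + O(δ)`
on the unit box and `F` has derivative `O(δ)`, then points on the graph of `F` satisfy
`|x - x̃| ≤ (1/2 + C'δ)|φ(x) - φ(x̃)|`. -/
theorem stmt4 :
    ∀ C : ℝ, 0 ≤ C → ∃ δ₀ > (0:ℝ), ∃ C' > (0:ℝ), ∀ δ : ℝ, 0 < δ → δ ≤ δ₀ →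
    ∀ (φ : ℝ × ℝ → ℝ × ℝ) (L : ℝ × ℝ → (ℝ × ℝ →L[ℝ] ℝ × ℝ)),
      (∀ p ∈ box, HasFDerivWithinAt φ (L p) box p) →
      (∀ p ∈ box, ∀ v : ℝ × ℝ, euclNorm (L p v - (2 * v.1, v.2 / 2)) ≤ δ * euclNorm v) →
      ∀ F : ℝ → ℝ,
        DifferentiableOn ℝ F (Icc (-1) 1) →
        (∀ s ∈ Icc (-1:ℝ) 1, |derivWithin F (Icc (-1) 1) s| ≤ C * δ) →
        MapsTo F (Icc (-1:ℝ) 1) (Icc (-1:ℝ) 1) →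
        ∀ x₁ ∈ Icc (-1:ℝ) 1, ∀ y₁ ∈ Icc (-1:ℝ) 1,
          euclNorm ((x₁, F x₁) - (y₁, F y₁))
            ≤ (1/2 + C' * δ) * euclNorm (φ (x₁, F x₁) - φ (y₁, F y₁)) := by
  intro C hC
  refine ⟨1 / ((1 + C) * (1 + 2 * C)), by positivity, 1 + 2 * C, by positivity, ?_⟩
  intro δ hδ hδ0 φ L hφ hE F hFdiff hFderiv hFmap x₁ hx₁ y₁ hy₁
  have hδ1 : δ * ((1 + C) * (1 + 2 * C)) ≤ 1 :=
    (le_div_iff₀ (by positivity)).mp hδ0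
  have hδle1 : δ ≤ 1 := by nlinarith [mul_nonneg hC hδ.le, mul_nonneg hC (mul_nonneg hC hδ.le)]
  set I : Set ℝ := Icc (-1:ℝ) 1 with hI
  set Fd : ℝ → ℝ := fun s => derivWithin F I s with hFd
  -- step 1 : |F x₁ - F y₁| ≤ C δ |x₁ - y₁|
  have hLip : |F x₁ - F y₁| ≤ C * δ * |x₁ - y₁| := by
    have := (convex_Icc (-1:ℝ) 1).norm_image_sub_le_of_norm_derivWithin_le hFdiff
      (fun s hs => by simpa [Real.norm_eq_abs] using hFderiv s hs) hy₁ hx₁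
    simpa [Real.norm_eq_abs] using this
  -- step 2 : derivative of g s = (φ (s, F s)).1 - 2 s is small
  set g : ℝ → ℝ := fun s => (φ (s, F s)).1 - 2 * s with hg
  have hmem : ∀ s ∈ I, (s, F s) ∈ box := fun s hs => ⟨hs, hFmap hs⟩
  have hder : ∀ s ∈ I, HasDerivWithinAt g ((L (s, F s) (1, Fd s)).1 - 2) I s := by
    intro s hs
    have hγ : HasDerivWithinAt (fun t => (t, F t)) (1, Fd s) I s :=
      (hasDerivWithinAt_id s I).prodMk (hFdiff s hs).hasDerivWithinAt
    have hcomp := (hφ _ (hmem s hs)).comp_hasDerivWithinAt s hγ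
      (fun t ht => hmem t ht)
    have h1 : HasDerivWithinAt (fun t => (φ (t, F t)).1)
        ((L (s, F s) (1, Fd s)).1) I s := hcomp.fst
    have h2 : HasDerivWithinAt (fun t => 2 * t) 2 I s := by
      simpa using (hasDerivWithinAt_id s I).const_mul 2
    exact h1.sub h2
  have hderb : ∀ s ∈ I, ‖(L (s, F s) (1, Fd s)).1 - 2‖ ≤ δ * (1 + C * δ) := by
    intro s hs
    set v : ℝ × ℝ := (1, Fd s) with hv
    have h1 : |(L (s, F s) v - (2 * v.1, v.2 / 2)).1|
        ≤ euclNorm (L (s, F s) v - (2 * v.1, v.2 / 2)) := abs_fst_le_euclNorm _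
    have h2 := hE _ (hmem s hs) v
    have h3 : euclNorm v ≤ 1 + C * δ := by
      have := euclNorm_le_abs_add v
      have h4 : |v.2| ≤ C * δ := hFderiv s hs
      have : euclNorm v ≤ |(1:ℝ)| + |v.2| := this
      simpa using this.trans (by simpa using add_le_add_left h4 (|(1:ℝ)|))
    have h5 : (L (s, F s) v - (2 * v.1, v.2 / 2)).1 = (L (s, F s) v).1 - 2 := by
      simp [hv]
    rw [Real.norm_eq_abs, ← h5]
    calc |(L (s, F s) v - (2 * v.1, v.2 / 2)).1|
        ≤ δ * euclNorm v := h1.trans h2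
      _ ≤ δ * (1 + C * δ) := by nlinarith
  have hgbound : |g x₁ - g y₁| ≤ δ * (1 + C * δ) * |x₁ - y₁| := by
    have := (convex_Icc (-1:ℝ) 1).norm_image_sub_le_of_norm_hasDerivWithin_le hder
      hderb hy₁ hx₁
    simpa [Real.norm_eq_abs] using this
  -- assemble
  set u : ℝ × ℝ := φ (x₁, F x₁) with hu
  set w : ℝ × ℝ := φ (y₁, F y₁) with hw
  have hN1 : |u.1 - w.1| ≤ euclNorm (u - w) := by
    simpa using abs_fst_le_euclNorm (u - w)
  have hLHS : euclNorm ((x₁, F x₁) - (y₁, F y₁)) ≤ |x₁ - y₁| + |F x₁ - F y₁| := by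
    simpa using euclNorm_le_abs_add ((x₁, F x₁) - (y₁, F y₁))
  have hrw : g x₁ - g y₁ = (u.1 - w.1) - 2 * (x₁ - y₁) := by
    simp [hg, hu, hw]; ring
  have htri : 2 * |x₁ - y₁| ≤ |u.1 - w.1| + |(u.1 - w.1) - 2 * (x₁ - y₁)| := by
    calc 2 * |x₁ - y₁| = |2 * (x₁ - y₁)| := by rw [abs_mul]; norm_num
      _ = |(u.1 - w.1) - ((u.1 - w.1) - 2 * (x₁ - y₁))| := by ring_nf
      _ ≤ _ := abs_sub _ _
  rw [hrw] at hgbound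
  have hN2 : 2 * |x₁ - y₁| - δ * (1 + C * δ) * |x₁ - y₁| ≤ euclNorm (u - w) := by
    nlinarith [abs_nonneg (x₁ - y₁)]
  have habs : (0:ℝ) ≤ |x₁ - y₁| := abs_nonneg _
  have hNn : (0:ℝ) ≤ euclNorm (u - w) := Real.sqrt_nonneg _
  have key : 1 + C * δ ≤ (1/2 + (1 + 2 * C) * δ) * (2 - δ * (1 + C * δ)) := by
    nlinarith [hδ1, hδ.le, hC, hδle1, mul_nonneg hC hδ.le, sq_nonneg δ,
      mul_nonneg (mul_nonneg hC hδ.le) hδ.le,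
      mul_le_mul_of_nonneg_left hδ1 (mul_nonneg hC hδ.le),
      mul_le_mul_of_nonneg_left hδ1 hδ.le]
  calc euclNorm ((x₁, F x₁) - (y₁, F y₁)) ≤ |x₁ - y₁| + |F x₁ - F y₁| := hLHS
    _ ≤ (1 + C * δ) * |x₁ - y₁| := by nlinarith
    _ ≤ ((1/2 + (1 + 2 * C) * δ) * (2 - δ * (1 + C * δ))) * |x₁ - y₁| :=
        mul_le_mul_of_nonneg_right key habs
    _ = (1/2 + (1 + 2 * C) * δ) * ((2 - δ * (1 + C * δ)) * |x₁ - y₁|) := by ring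
    _ ≤ (1/2 + (1 + 2 * C) * δ) * euclNorm (u - w) := by
        apply mul_le_mul_of_nonneg_left _ (by positivity)
        nlinarith [hN2]
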